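/- Let n be a positive even integer. The real vector space of GL_n(ℝ)-equivariant maps f : (ℙ(ℝⁿ))^{n+1} → ℝ_ε is exactly one-dimensional: there exists a nonzero such map, and any two such maps are proportional (any nonzero one is unique up to scaling by a nonzero real number). -/

import Mathlib

open Matrix

noncomputable section

/-- Sign of the determinant of `g` (the character ε of `GL_n(ℝ)`). -/
def eps {n : ℕ} (g : GL (Fin n) ℝ) : ℝ :=
  Real.sign ((g : Matrix (Fin n) (Fin n) ℝ).det)

/-- Action of `GL n ℝ` on the projective space of `ℝⁿ`. -/
def glAct {n : ℕ} (g : GL (Fin n) ℝ) (x : Projectivization ℝ (Fin n → ℝ)) :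
    Projectivization ℝ (Fin n → ℝ) :=
  Projectivization.map (Matrix.mulVecLin (g : Matrix (Fin n) (Fin n) ℝ))
    (fun a b hab => by
      have hab' : (↑g : Matrix (Fin n) (Fin n) ℝ) *ᵥ a = (↑g : Matrix (Fin n) (Fin n) ℝ) *ᵥ b := hab
      have key : ((↑g⁻¹ : Matrix (Fin n) (Fin n) ℝ) * (↑g : Matrix (Fin n) (Fin n) ℝ)) = 1 :=
        Units.inv_mul g
      calc a = 1 *ᵥ a := (Matrix.one_mulVec a).symm
        _ = (↑g⁻¹ : Matrix (Fin n) (Fin n) ℝ) *ᵥ ((↑g : Matrix (Fin n) (Fin n) ℝ) *ᵥ a) := by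
              rw [Matrix.mulVec_mulVec, key]
        _ = (↑g⁻¹ : Matrix (Fin n) (Fin n) ℝ) *ᵥ ((↑g : Matrix (Fin n) (Fin n) ℝ) *ᵥ b) := by
              rw [hab']
        _ = 1 *ᵥ b := by rw [Matrix.mulVec_mulVec, key]
        _ = b := Matrix.one_mulVec b) x

/-- `GL_n(ℝ)`-equivariance with values in the sign module `ℝ_ε`:
`f(g·x_1,…,g·x_q) = ε(g)·f(x_1,…,x_q)`. -/
def PEquivariant {n q : ℕ} (f : (Fin q → Projectivization ℝ (Fin n → ℝ)) → ℝ) : Prop :=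
  ∀ (g : GL (Fin n) ℝ) (x : Fin q → Projectivization ℝ (Fin n → ℝ)),
    f (fun i => glAct g (x i)) = eps g * f x


namespace Stmt0Aux

variable {n : ℕ}

lemma rsign_mul (a b : ℝ) (ha : a ≠ 0) : Real.sign (a * b) = Real.sign a * Real.sign b := by
  rcases lt_trichotomy a 0 with h | h | h
  · rcases lt_trichotomy b 0 with h' | h' | h'
    · rw [Real.sign_of_pos (mul_pos_of_neg_of_neg h h'), Real.sign_of_neg h, Real.sign_of_neg h']
      norm_num
    · simp [h', Real.sign_zero]
    · rw [Real.sign_of_neg (mul_neg_of_neg_of_pos h h'), Real.sign_of_neg h, Real.sign_of_pos h']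
      norm_num
  · exact absurd h ha
  · rcases lt_trichotomy b 0 with h' | h' | h'
    · rw [Real.sign_of_neg (mul_neg_of_pos_of_neg h h'), Real.sign_of_pos h, Real.sign_of_neg h']
      norm_num
    · simp [h', Real.sign_zero]
    · rw [Real.sign_of_pos (mul_pos h h'), Real.sign_of_pos h, Real.sign_of_pos h']
      norm_num

lemma rsign_pm (a : ℝ) (ha : a ≠ 0) : Real.sign a = 1 ∨ Real.sign a = -1 := by
  rcases lt_trichotomy a 0 with h | h | h
  · exact Or.inr (Real.sign_of_neg h)
  · exact absurd h ha
  · exact Or.inl (Real.sign_of_pos h)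

lemma rsign_ne_zero (a : ℝ) (ha : a ≠ 0) : Real.sign a ≠ 0 := by
  rcases rsign_pm a ha with h | h <;> rw [h] <;> norm_num

lemma rsign_prod {ι : Type*} (s : Finset ι) (f : ι → ℝ) (hf : ∀ i ∈ s, f i ≠ 0) :
    Real.sign (∏ i ∈ s, f i) = ∏ i ∈ s, Real.sign (f i) := by
  classical
  induction s using Finset.induction_on with
  | empty => simp [Real.sign_one]
  | @insert a s' ha ih =>
    rw [Finset.prod_insert ha, Finset.prod_insert ha,
      rsign_mul _ _ (hf a (Finset.mem_insert_self _ _)),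
      ih (fun i hi => hf i (Finset.mem_insert_of_mem hi))]

lemma prod_sign_pow (he : Even n) (s : Fin (n + 1) → ℝ)
    (hs : ∀ j, s j = 1 ∨ s j = -1) :
    ∏ i : Fin (n + 1), ∏ j : Fin n, s (i.succAbove j) = 1 := by
  set P : ℝ := ∏ k, s k with hP
  have hsq : ∀ j, s j * s j = 1 := by
    intro j; rcases hs j with h | h <;> rw [h] <;> norm_num
  have h1 : ∀ i : Fin (n + 1), ∏ j : Fin n, s (i.succAbove j) = s i * P := by
    intro i
    have := Fin.prod_univ_succAbove s i
    rw [hP, this, ← mul_assoc, hsq i, one_mul]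
  have hPP : P * P = 1 := by
    rw [hP, ← Finset.prod_mul_distrib]
    exact Finset.prod_eq_one fun j _ => hsq j
  calc ∏ i : Fin (n + 1), ∏ j : Fin n, s (i.succAbove j)
      = ∏ i : Fin (n + 1), (s i * P) := Finset.prod_congr rfl fun i _ => h1 i
    _ = P * P ^ (n + 1) := by rw [Finset.prod_mul_distrib, ← hP]; simp [mul_comm]
    _ = 1 := by
        obtain ⟨m, hm⟩ := he
        have hn : n = 2 * m := by omega
        subst hn
        have : P * P ^ (2 * m + 1) = (P * P) ^ (m + 1) := by ring
        rw [this, hPP, one_pow]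

/-- Matrix whose rows are the vectors `v j` for `j ≠ i`. -/
def rowsOf (v : Fin (n + 1) → (Fin n → ℝ)) (i : Fin (n + 1)) : Matrix (Fin n) (Fin n) ℝ :=
  Matrix.of fun j k => v (i.succAbove j) k

/-- The sign-product invariant of a tuple of vectors. -/
def sprod (v : Fin (n + 1) → (Fin n → ℝ)) : ℝ :=
  ∏ i : Fin (n + 1), Real.sign ((rowsOf v i).det)

lemma sprod_smul (he : Even n) (v : Fin (n + 1) → (Fin n → ℝ)) (c : Fin (n + 1) → ℝ)
    (hc : ∀ j, c j ≠ 0) :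
    sprod (fun j => c j • v j) = sprod v := by
  have hrow : ∀ i, rowsOf (fun j => c j • v j) i =
      Matrix.of fun j k => c (i.succAbove j) * (rowsOf v i) j k := by
    intro i; ext j k; simp [rowsOf]
  have hdet : ∀ i, (rowsOf (fun j => c j • v j) i).det =
      (∏ j : Fin n, c (i.succAbove j)) * (rowsOf v i).det := by
    intro i; rw [hrow i]; exact Matrix.det_mul_column _ _
  have hs : ∀ i, Real.sign ((rowsOf (fun j => c j • v j) i).det)
      = (∏ j : Fin n, Real.sign (c (i.succAbove j))) * Real.sign ((rowsOf v i).det) := by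
    intro i
    rw [hdet i, rsign_mul _ _ (Finset.prod_ne_zero_iff.2 fun j _ => hc _),
      rsign_prod _ _ (fun j _ => hc _)]
  unfold sprod
  rw [Finset.prod_congr rfl (fun i _ => hs i), Finset.prod_mul_distrib,
    prod_sign_pow he (fun j => Real.sign (c j)) (fun j => rsign_pm _ (hc j)), one_mul]

lemma sprod_mulVec (he : Even n) (v : Fin (n + 1) → (Fin n → ℝ))
    (G : Matrix (Fin n) (Fin n) ℝ) (hG : G.det ≠ 0) :
    sprod (fun j => G *ᵥ v j) = Real.sign G.det * sprod v := by
  have hrow : ∀ i, rowsOf (fun j => G *ᵥ v j) i = rowsOf v i * Gᵀ := by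
    intro i; ext j k
    simp [rowsOf, Matrix.mul_apply, Matrix.mulVec, dotProduct, Matrix.transpose_apply, mul_comm]
  have hdet : ∀ i, (rowsOf (fun j => G *ᵥ v j) i).det = (rowsOf v i).det * G.det := by
    intro i; rw [hrow i, Matrix.det_mul, Matrix.det_transpose]
  have hsgn : Real.sign G.det * Real.sign G.det = 1 := by
    rcases rsign_pm G.det hG with h | h <;> rw [h] <;> norm_num
  have hs : ∀ i, Real.sign ((rowsOf (fun j => G *ᵥ v j) i).det)
      = Real.sign ((rowsOf v i).det) * Real.sign G.det := by
    intro i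
    rw [hdet i, mul_comm ((rowsOf v i).det), rsign_mul _ _ hG, mul_comm]
  unfold sprod
  rw [Finset.prod_congr rfl (fun i _ => hs i), Finset.prod_mul_distrib, Finset.prod_const,
    Finset.card_univ, Fintype.card_fin]
  obtain ⟨m, hm⟩ := he
  have hn : n = 2 * m := by omega
  subst hn
  have h2 : (Real.sign G.det) ^ (2 * m + 1)
      = (Real.sign G.det * Real.sign G.det) ^ m * Real.sign G.det := by ring
  rw [h2, hsgn, one_pow, one_mul, mul_comm]

lemma det_coe_ne_zero (g : GL (Fin n) ℝ) : (g : Matrix (Fin n) (Fin n) ℝ).det ≠ 0 := by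
  have : IsUnit (g : Matrix (Fin n) (Fin n) ℝ) := ⟨g, rfl⟩
  exact ((Matrix.isUnit_iff_isUnit_det _).mp this).ne_zero

lemma mulVec_ne (g : GL (Fin n) ℝ) {v : Fin n → ℝ} (hv : v ≠ 0) :
    (g : Matrix (Fin n) (Fin n) ℝ) *ᵥ v ≠ 0 := by
  have hinj : Function.Injective ((g : Matrix (Fin n) (Fin n) ℝ).mulVec) :=
    Matrix.mulVec_injective_iff_isUnit.mpr ⟨g, rfl⟩
  intro h
  exact hv (hinj (by rw [h, Matrix.mulVec_zero]))

lemma glAct_mk (g : GL (Fin n) ℝ) (v : Fin n → ℝ) (hv : v ≠ 0) :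
    glAct g (Projectivization.mk ℝ v hv) =
      Projectivization.mk ℝ ((g : Matrix (Fin n) (Fin n) ℝ) *ᵥ v) (mulVec_ne g hv) := by
  unfold glAct
  exact Projectivization.map_mk _ _ v hv

lemma glAct_mul (a b : GL (Fin n) ℝ) (x : Projectivization ℝ (Fin n → ℝ)) :
    glAct (a * b) x = glAct a (glAct b x) := by
  induction x using Projectivization.ind with
  | h v hv =>
    rw [glAct_mk, glAct_mk, glAct_mk]
    congr 1
    rw [Units.val_mul, Matrix.mulVec_mulVec]

lemma glAct_one (x : Projectivization ℝ (Fin n → ℝ)) : glAct (1 : GL (Fin n) ℝ) x = x := by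
  induction x using Projectivization.ind with
  | h v hv =>
    rw [glAct_mk]
    congr 1
    rw [Units.val_one, Matrix.one_mulVec]

lemma colrow_mulVec (a p w : Fin n → ℝ) :
    (Matrix.replicateCol Unit a * Matrix.replicateRow Unit p) *ᵥ w = (p ⬝ᵥ w) • a := by
  funext k
  simp [Matrix.mulVec, Matrix.mul_apply, dotProduct, Finset.mul_sum, Finset.sum_mul,
    mul_comm, mul_left_comm]

/-- Reflection fixing `W` pointwise and negating `u ∉ W`. -/
lemma exists_reflection (W : Submodule ℝ (Fin n → ℝ)) (u : Fin n → ℝ) (hu : u ∉ W) :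
    ∃ G : Matrix (Fin n) (Fin n) ℝ, G.det = -1 ∧ (∀ w ∈ W, G *ᵥ w = w) ∧ G *ᵥ u = -u := by
  have hq : (Submodule.Quotient.mk u : (Fin n → ℝ) ⧸ W) ≠ 0 := by
    rwa [ne_eq, Submodule.Quotient.mk_eq_zero]
  have : ¬ ∀ ψ : Module.Dual ℝ ((Fin n → ℝ) ⧸ W), ψ (Submodule.Quotient.mk u) = 0 := by
    rw [Module.forall_dual_apply_eq_zero_iff]
    exact hq
  push_neg at this
  obtain ⟨ψ, hψ⟩ := this
  set φ : (Fin n → ℝ) →ₗ[ℝ] ℝ := ψ.comp W.mkQ with hφdef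
  have hφu : φ u ≠ 0 := hψ
  have hφW : ∀ w ∈ W, φ w = 0 := by
    intro w hw
    simp only [hφdef, LinearMap.comp_apply]
    rw [Submodule.mkQ_apply, (Submodule.Quotient.mk_eq_zero W).mpr hw, map_zero]
  set p : Fin n → ℝ := fun k => φ (fun j => if k = j then 1 else 0) with hp
  have hpdot : ∀ w, p ⬝ᵥ w = φ w := by
    intro w
    conv_rhs => rw [pi_eq_sum_univ w]
    rw [map_sum]
    simp only [LinearMap.map_smul, smul_eq_mul, dotProduct, hp, mul_comm]
  set a : Fin n → ℝ := (-(2 * (φ u)⁻¹)) • u with ha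
  refine ⟨1 + Matrix.replicateCol Unit a * Matrix.replicateRow Unit p, ?_, ?_, ?_⟩
  · rw [Matrix.det_one_add_replicateCol_mul_replicateRow]
    rw [ha, dotProduct_smul, hpdot, smul_eq_mul]
    field_simp
    ring
  · intro w hw
    rw [Matrix.add_mulVec, Matrix.one_mulVec, colrow_mulVec, hpdot, hφW w hw, zero_smul, add_zero]
  · rw [Matrix.add_mulVec, Matrix.one_mulVec, colrow_mulVec, hpdot, ha, smul_smul]
    have : φ u * -(2 * (φ u)⁻¹) = -2 := by field_simp
    rw [this]
    funext k
    simp only [Pi.add_apply, Pi.smul_apply, Pi.neg_apply, smul_eq_mul]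
    ring

/-- If the rows `v (i.succAbove j)` have vanishing determinant, their span is proper. -/
lemma span_ne_top (v : Fin (n + 1) → (Fin n → ℝ)) (i : Fin (n + 1))
    (hdet : (rowsOf v i).det = 0) :
    Submodule.span ℝ (Set.range fun j : Fin n => v (i.succAbove j)) ≠ ⊤ := by
  intro htop
  have hcard : Fintype.card (Fin n) = Module.finrank ℝ (Fin n → ℝ) := by
    rw [Fintype.card_fin, Module.finrank_fin_fun]
  have hli : LinearIndependent ℝ (fun j : Fin n => v (i.succAbove j)) :=
    linearIndependent_of_top_le_span_of_card_eq_finrank (le_of_eq htop.symm) hcard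
  have hli' : LinearIndependent ℝ (fun j : Fin n => rowsOf v i j) := hli
  have : IsUnit (rowsOf v i) := Matrix.linearIndependent_rows_iff_isUnit.mp hli'
  have := (Matrix.isUnit_iff_isUnit_det _).mp this
  rw [isUnit_iff_ne_zero] at this
  exact this hdet

/-- An equivariant map vanishes on degenerate tuples. -/
lemma vanish_of_degenerate (f : (Fin (n + 1) → Projectivization ℝ (Fin n → ℝ)) → ℝ)
    (hf : PEquivariant f) (x : Fin (n + 1) → Projectivization ℝ (Fin n → ℝ))
    (i : Fin (n + 1)) (hdet : (rowsOf (fun j => (x j).rep) i).det = 0) : f x = 0 := by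
  set v : Fin (n + 1) → (Fin n → ℝ) := fun j => (x j).rep with hv
  set W : Submodule ℝ (Fin n → ℝ) :=
    Submodule.span ℝ (Set.range fun j : Fin n => v (i.succAbove j)) with hW
  have hWtop : W ≠ ⊤ := span_ne_top v i hdet
  have hmem : ∀ j, j ≠ i → v j ∈ W := by
    intro j hj
    obtain ⟨j', hj'⟩ := Fin.exists_succAbove_eq hj
    exact Submodule.subset_span ⟨j', congrArg v hj'⟩
  -- choose the vector to negate
  obtain ⟨u, hu, hiu⟩ : ∃ u, u ∉ W ∧ (v i ∈ W ∨ u = (x i).rep) := by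
    by_cases hvi : v i ∈ W
    · have : ∃ u, u ∉ W := by
        by_contra h
        push_neg at h
        exact hWtop (Submodule.eq_top_iff'.mpr h)
      obtain ⟨u, hu⟩ := this
      exact ⟨u, hu, Or.inl hvi⟩
    · exact ⟨(x i).rep, hvi, Or.inr rfl⟩
  obtain ⟨G, hGdet, hGfix, hGu⟩ := exists_reflection W u hu
  set g : GL (Fin n) ℝ := Matrix.GeneralLinearGroup.mkOfDetNeZero G (by rw [hGdet]; norm_num)
    with hg
  have hfixline : ∀ j, glAct g (x j) = x j := by
    intro j
    conv_lhs => rw [← (x j).mk_rep]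
    conv_rhs => rw [← (x j).mk_rep]
    rw [glAct_mk, Projectivization.mk_eq_mk_iff']
    by_cases hj : j = i
    · subst hj
      rcases hiu with hvi | hui
      · exact ⟨1, by rw [one_smul]; exact (hGfix _ hvi).symm⟩
      · refine ⟨-1, ?_⟩
        rw [hui] at hGu
        rw [neg_one_smul]
        exact hGu.symm
    · exact ⟨1, by rw [one_smul]; exact (hGfix _ (hmem j hj)).symm⟩
  have heq := hf g x
  have hfun : (fun j => glAct g (x j)) = x := funext hfixline
  rw [hfun] at heq
  have heps : eps g = -1 := by
    show Real.sign G.det = -1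
    rw [hGdet]
    exact Real.sign_of_neg (by norm_num)
  rw [heps] at heq
  linarith

/-- Representative vectors of the standard tuple. -/
def stdVec (i : Fin (n + 1)) : Fin n → ℝ :=
  Fin.cases (fun _ => 1) (fun j => Pi.single j 1) i

lemma stdVec_ne (hn : 0 < n) (i : Fin (n + 1)) : stdVec i ≠ 0 := by
  induction i using Fin.cases with
  | zero => exact fun h => one_ne_zero (congrFun h ⟨0, hn⟩)
  | succ j =>
    intro h
    have := congrFun h j
    rw [stdVec, Fin.cases_succ, Pi.single_eq_same] at this
    exact one_ne_zero this

/-- The standard tuple: the all-ones line followed by the coordinate lines. -/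
def stdTuple (hn : 0 < n) (i : Fin (n + 1)) : Projectivization ℝ (Fin n → ℝ) :=
  Projectivization.mk ℝ (stdVec i) (stdVec_ne hn i)

/-- Any tuple all of whose `n`-subsets are independent lies in the orbit of the standard tuple. -/
lemma exists_transfer (hn : 0 < n)
    (x : Fin (n + 1) → Projectivization ℝ (Fin n → ℝ))
    (hx : ∀ i, (rowsOf (fun j => (x j).rep) i).det ≠ 0) :
    ∃ g : GL (Fin n) ℝ, ∀ i, glAct g (stdTuple hn i) = x i := by
  classical
  set v : Fin (n + 1) → (Fin n → ℝ) := fun j => (x j).rep with hv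
  set A : Matrix (Fin n) (Fin n) ℝ := rowsOf v 0 with hA
  have hAdet : A.det ≠ 0 := hx 0
  have hAv : ∀ (m : Fin n) (k : Fin n), A m k = v m.succ k := by
    intro m k
    show v ((0 : Fin (n + 1)).succAbove m) k = v m.succ k
    rw [Fin.zero_succAbove]
  set c : Fin n → ℝ := v 0 ᵥ* A⁻¹ with hc
  have hcA : c ᵥ* A = v 0 := by
    rw [hc, Matrix.vecMul_vecMul, Matrix.nonsing_inv_mul A (isUnit_iff_ne_zero.mpr hAdet), Matrix.vecMul_one]
  have hsum : v 0 = ∑ m : Fin n, c m • v m.succ := by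
    funext k
    rw [← hcA]
    show ∑ m, c m * A m k = _
    simp [hAv, Finset.sum_apply]
  have hcne : ∀ j, c j ≠ 0 := by
    intro j hj0
    set S : Submodule ℝ (Fin n → ℝ) :=
      Submodule.span ℝ (Set.range fun m : {m : Fin n // m ≠ j} => v m.val.succ) with hS
    have hvS : ∀ l : Fin (n + 1), l ≠ j.succ → v l ∈ S := by
      intro l hl
      induction l using Fin.cases with
      | zero =>
        rw [hsum]
        apply Submodule.sum_mem
        intro m _
        by_cases hm : m = j
        · subst hm
          rw [hj0, zero_smul]
          exact S.zero_mem
        · exact Submodule.smul_mem _ _ (Submodule.subset_span ⟨⟨m, hm⟩, rfl⟩)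
      | succ m =>
        have hm : m ≠ j := fun h => hl (by rw [h])
        exact Submodule.subset_span ⟨⟨m, hm⟩, rfl⟩
    have hrows : ∀ m : Fin n, rowsOf v j.succ m ∈ S := by
      intro m
      have h1 : rowsOf v j.succ m = v (j.succ.succAbove m) := rfl
      rw [h1]
      exact hvS _ (Fin.succAbove_ne j.succ m)
    have hli : LinearIndependent ℝ (fun m : Fin n => rowsOf v j.succ m) :=
      Matrix.linearIndependent_rows_iff_isUnit.mpr
        ((Matrix.isUnit_iff_isUnit_det _).mpr (isUnit_iff_ne_zero.mpr (hx j.succ)))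
    have h1 : Module.finrank ℝ
        (Submodule.span ℝ (Set.range fun m : Fin n => rowsOf v j.succ m)) = n := by
      rw [finrank_span_eq_card hli, Fintype.card_fin]
    have hle : Submodule.span ℝ (Set.range fun m : Fin n => rowsOf v j.succ m) ≤ S :=
      Submodule.span_le.mpr (by rintro _ ⟨m, rfl⟩; exact hrows m)
    have h4 := Submodule.finrank_mono hle
    have h2 : Module.finrank ℝ S ≤ Fintype.card {m : Fin n // m ≠ j} :=
      finrank_range_le_card _
    have h3 : Fintype.card {m : Fin n // m ≠ j} < n := by
      have := Fintype.card_subtype_lt (p := fun m : Fin n => m ≠ j) (x := j) (by simp)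
      simpa using this
    rw [h1] at h4
    omega
  set B : Matrix (Fin n) (Fin n) ℝ := Matrix.of (fun m k => c m * v m.succ k) with hB
  have hBdet : B.det = (∏ m, c m) * A.det := by
    have : B = Matrix.of fun m k => c m * A m k := by
      ext m k
      rw [hB]
      show c m * v m.succ k = c m * A m k
      rw [hAv]
    rw [this]
    exact Matrix.det_mul_column _ _
  have hGdet : (Bᵀ).det ≠ 0 := by
    rw [Matrix.det_transpose, hBdet]
    exact mul_ne_zero (Finset.prod_ne_zero_iff.2 fun m _ => hcne m) hAdet
  refine ⟨Matrix.GeneralLinearGroup.mkOfDetNeZero Bᵀ hGdet, ?_⟩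
  intro i
  rw [stdTuple, glAct_mk]
  conv_rhs => rw [← (x i).mk_rep]
  rw [Projectivization.mk_eq_mk_iff']
  induction i using Fin.cases with
  | zero =>
    refine ⟨1, ?_⟩
    rw [one_smul]
    show v 0 = Bᵀ *ᵥ stdVec 0
    funext k
    have h1 : (Bᵀ *ᵥ stdVec 0) k = ∑ m, c m * v m.succ k := by
      simp [Matrix.mulVec, dotProduct, Matrix.transpose_apply, hB, stdVec]
    rw [h1, hsum]
    simp [Finset.sum_apply]
  | succ j =>
    refine ⟨c j, ?_⟩
    show c j • v j.succ = Bᵀ *ᵥ stdVec j.succ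
    have h0 : stdVec j.succ = Pi.single j 1 := by rw [stdVec, Fin.cases_succ]
    rw [h0]
    funext k
    rw [Matrix.mulVec_single]
    show c j * v j.succ k = Bᵀ k j * 1
    rw [mul_one]
    rfl

/-- The canonical equivariant map: product of the signs of the `(n+1)` maximal minors. -/
def F (x : Fin (n + 1) → Projectivization ℝ (Fin n → ℝ)) : ℝ :=
  sprod (fun j => (x j).rep)

lemma F_equivariant (he : Even n) :
    PEquivariant (F : (Fin (n + 1) → Projectivization ℝ (Fin n → ℝ)) → ℝ) := by
  intro g x
  have hrep : ∀ j, ∃ c : ℝ, c ≠ 0 ∧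
      (glAct g (x j)).rep = c • ((g : Matrix (Fin n) (Fin n) ℝ) *ᵥ (x j).rep) := by
    intro j
    have h1 : glAct g (x j) = Projectivization.mk ℝ
        ((g : Matrix (Fin n) (Fin n) ℝ) *ᵥ (x j).rep) (mulVec_ne g (x j).rep_nonzero) := by
      conv_lhs => rw [← (x j).mk_rep]
      rw [glAct_mk]
    obtain ⟨a, ha⟩ := Projectivization.exists_smul_eq_mk_rep ℝ
      ((g : Matrix (Fin n) (Fin n) ℝ) *ᵥ (x j).rep) (mulVec_ne g (x j).rep_nonzero)
    refine ⟨(a : ℝ), a.ne_zero, ?_⟩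
    rw [h1, ← ha]
    rfl
  choose cc hcc hrepc using hrep
  show sprod (fun j => (glAct g (x j)).rep) = eps g * sprod (fun j => (x j).rep)
  have h2 : (fun j => (glAct g (x j)).rep)
      = fun j => cc j • ((g : Matrix (Fin n) (Fin n) ℝ) *ᵥ (x j).rep) := funext hrepc
  rw [h2,
    sprod_smul he (fun j => (g : Matrix (Fin n) (Fin n) ℝ) *ᵥ (x j).rep) cc hcc,
    sprod_mulVec he (fun j => (x j).rep) _ (det_coe_ne_zero g)]
  rfl

lemma F_ne_zero (hn : 0 < n) (he : Even n) :
    ∃ x : Fin (n + 1) → Projectivization ℝ (Fin n → ℝ), F x ≠ 0 := by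
  set t : Fin (n + 1) → Fin n → ℝ := fun j k => ((j : ℕ) : ℝ) ^ (k : ℕ) with ht
  have htne : ∀ j, t j ≠ 0 := by
    intro j h
    have := congrFun h ⟨0, hn⟩
    simp [ht] at this
  refine ⟨fun j => Projectivization.mk ℝ (t j) (htne j), ?_⟩
  have hrep : ∀ j, ∃ c : ℝ, c ≠ 0 ∧
      (Projectivization.mk ℝ (t j) (htne j)).rep = c • t j := by
    intro j
    obtain ⟨a, ha⟩ := Projectivization.exists_smul_eq_mk_rep ℝ (t j) (htne j)
    exact ⟨(a : ℝ), a.ne_zero, by rw [← ha]; rfl⟩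
  choose cc hcc hrepc using hrep
  show sprod (fun j => (Projectivization.mk ℝ (t j) (htne j)).rep) ≠ 0
  rw [funext hrepc, sprod_smul he t cc hcc]
  unfold sprod
  rw [Finset.prod_ne_zero_iff]
  intro i _
  apply rsign_ne_zero
  have hvdm : rowsOf t i = Matrix.vandermonde
      (fun m : Fin n => (((i.succAbove m : Fin (n + 1)) : ℕ) : ℝ)) := by
    ext m k
    rfl
  rw [hvdm, Matrix.det_vandermonde]
  rw [Finset.prod_ne_zero_iff]
  intro a _
  rw [Finset.prod_ne_zero_iff]
  intro b hb
  rw [Finset.mem_Ioi] at hb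
  have : ((i.succAbove a : Fin (n + 1)) : ℕ) < ((i.succAbove b : Fin (n + 1)) : ℕ) :=
    Fin.strictMono_succAbove i hb
  have : (((i.succAbove a : Fin (n + 1)) : ℕ) : ℝ) < (((i.succAbove b : Fin (n + 1)) : ℕ) : ℝ) := by
    exact_mod_cast this
  exact sub_ne_zero.mpr (ne_of_gt this)

end Stmt0Aux

/-- for `n` positive and even, the space of `GL_n(ℝ)`-equivariant maps
`(ℙ(ℝⁿ))^{n+1} → ℝ_ε` is exactly one-dimensional: a nonzero such map exists, and any
such map is a (unique) scalar multiple of any given nonzero one. -/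
theorem stmt0 (n : ℕ) (hn : 0 < n) (he : Even n) :
    (∃ f : (Fin (n + 1) → Projectivization ℝ (Fin n → ℝ)) → ℝ, PEquivariant f ∧ f ≠ 0) ∧
    (∀ f g : (Fin (n + 1) → Projectivization ℝ (Fin n → ℝ)) → ℝ,
      PEquivariant f → PEquivariant g → g ≠ 0 →
        ∃! c : ℝ, f = fun x => c * g x) := by
  classical
  constructor
  · refine ⟨Stmt0Aux.F, Stmt0Aux.F_equivariant he, ?_⟩
    obtain ⟨x, hx⟩ := Stmt0Aux.F_ne_zero hn he
    intro h0
    rw [h0] at hx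
    exact hx rfl
  · intro f g hfE hgE hg
    obtain ⟨x, hgx⟩ : ∃ x, g x ≠ 0 := Function.ne_iff.mp hg
    have hxgen : ∀ i, (Stmt0Aux.rowsOf (fun j => (x j).rep) i).det ≠ 0 := by
      intro i hdet
      exact hgx (Stmt0Aux.vanish_of_degenerate g hgE x i hdet)
    refine ⟨f x * (g x)⁻¹, ?_, ?_⟩
    · funext y
      by_cases hy : ∀ i, (Stmt0Aux.rowsOf (fun j => (y j).rep) i).det ≠ 0
      · obtain ⟨gx, hgx'⟩ := Stmt0Aux.exists_transfer hn x hxgen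
        obtain ⟨gy, hgy'⟩ := Stmt0Aux.exists_transfer hn y hy
        set k := gy * gx⁻¹ with hkdef
        have hk : ∀ i, glAct k (x i) = y i := by
          intro i
          rw [← hgx' i, ← Stmt0Aux.glAct_mul]
          have hkk : k * gx = gy := by rw [hkdef, inv_mul_cancel_right]
          rw [hkk, hgy' i]
        have h1 : f y = eps k * f x := by rw [← funext hk]; exact hfE k x
        have h2 : g y = eps k * g x := by rw [← funext hk]; exact hgE k x
        rw [h1, h2]
        field_simp
      · push_neg at hy
        obtain ⟨i, hdet⟩ := hy
        rw [Stmt0Aux.vanish_of_degenerate f hfE y i hdet,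
          Stmt0Aux.vanish_of_degenerate g hgE y i hdet, mul_zero]
    · intro c' hc'
      have h1 := congrFun hc' x
      rw [h1]
      field_simp

end
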